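/- Let λ > 0, and let m, s be positive integers with s ≥ λ. Let ν be a probability distribution on ℝ with finite absolute m-th moment and write m_ℓ = ∫ x^ℓ dν(x) for ℓ ≤ m. On some probability space let B_1, …, B_s, X_1, …, X_s be mutually independent random variables, where each B_j is Bernoulli with P(B_j = 1) = λ/s and each X_j has distribution ν. Then E[ ( Σ_{j=1}^s B_j X_j )^m ] = Σ_{σ ∈ Π(m)} [ s! / ( s^{|σ|} (s − |σ|)! ) ] · λ^{|σ|} · Π_{k=1}^{|σ|} m_{|σ_k|}, where the sum runs over all partitions σ of {1, …, m} with blocks σ_1, …, σ_{|σ|}; consequently, as s → ∞ these moments converge to Σ_{σ ∈ Π(m)} λ^{|σ|} Π_{k=1}^{|σ|} m_{|σ_k|}. -/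

import Mathlib

open MeasureTheory ProbabilityTheory Real BigOperators Filter

/-- `P` is (the set of blocks of) a partition of `{1, …, m}` (i.e. of `Fin m`): all blocks are
nonempty, pairwise disjoint, and cover everything. -/
def IsPartitionFinset (m : ℕ) (P : Finset (Finset (Fin m))) : Prop :=
  (∀ b ∈ P, b.Nonempty) ∧
  (∀ b ∈ P, ∀ b' ∈ P, b ≠ b' → Disjoint b b') ∧
  (∀ i : Fin m, ∃ b ∈ P, i ∈ b)

instance (m : ℕ) (P : Finset (Finset (Fin m))) : Decidable (IsPartitionFinset m P) := by
  unfold IsPartitionFinset; infer_instance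

lemma indep_integral_prod {Ωs : Type*} [MeasurableSpace Ωs] {μ : Measure Ωs}
    {ι : Type*} {f : ι → Ωs → ℝ}
    (hindep : iIndepFun f μ) (hmeas : ∀ i, Measurable (f i))
    (T : Finset ι) (hint : ∀ i ∈ T, Integrable (f i) μ) :
    Integrable (fun ω => ∏ i ∈ T, f i ω) μ ∧
      ∫ ω, ∏ i ∈ T, f i ω ∂μ = ∏ i ∈ T, ∫ ω, f i ω ∂μ := by
  classical
  haveI := hindep.isProbabilityMeasure
  revert hint
  induction T using Finset.cons_induction with
  | empty => intro _; simp
  | cons a T ha ih =>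
    intro hint
    obtain ⟨hTint, hTeq⟩ := ih (fun i hi => hint i (Finset.mem_cons_of_mem hi))
    have hia : Integrable (f a) μ := hint a (Finset.mem_cons_self a T)
    have hindep2 : IndepFun (f a) (fun ω => ∏ i ∈ T, f i ω) μ := by
      have h := hindep.indepFun_finsetProd_of_notMem hmeas ha
      have : (∏ j ∈ T, f j) = fun ω => ∏ i ∈ T, f i ω := by
        funext ω; simp [Finset.prod_apply]
      rw [this] at h
      exact h.symm
    have hmul : Integrable (fun ω => f a ω * ∏ i ∈ T, f i ω) μ :=
      hindep2.integrable_mul hia hTint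
    have hveq : ∫ ω, f a ω * ∏ i ∈ T, f i ω ∂μ
        = (∫ ω, f a ω ∂μ) * ∫ ω, ∏ i ∈ T, f i ω ∂μ :=
      hindep2.integral_mul_eq_mul_integral hia.1 hTint.1
    constructor
    · simp only [Finset.prod_cons]; exact hmul
    · simp only [Finset.prod_cons]
      rw [hveq, hTeq]

lemma descFactorial_div_pow_tendsto (r : ℕ) :
    Tendsto (fun s : ℕ => (s.descFactorial r : ℝ) / (s : ℝ) ^ r) atTop (nhds 1) := by
  have h : Tendsto (fun s : ℕ => ∏ i ∈ Finset.range r, (1 - (i : ℝ) / s)) atTop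
      (nhds (∏ i ∈ Finset.range r, (1 : ℝ))) := by
    refine tendsto_finset_prod _ (fun i _ => ?_)
    have h2 : Tendsto (fun s : ℕ => (i : ℝ) / s) atTop (nhds 0) :=
      tendsto_const_div_atTop_nhds_zero_nat _
    simpa using tendsto_const_nhds.sub h2
  simp only [Finset.prod_const_one] at h
  refine h.congr' ?_
  filter_upwards [eventually_ge_atTop (max r 1)] with s hs
  have hs1 : 1 ≤ s := le_trans (le_max_right r 1) hs
  have hsr : r ≤ s := le_trans (le_max_left r 1) hs
  have hs0 : (s : ℝ) ≠ 0 := by positivity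
  have hcast : (s.descFactorial r : ℝ) = ∏ i ∈ Finset.range r, ((s : ℝ) - i) := by
    rw [Nat.descFactorial_eq_prod_range, Nat.cast_prod]
    refine Finset.prod_congr rfl fun i hi => ?_
    have : i ≤ s := le_trans (le_of_lt (Finset.mem_range.mp hi)) hsr
    exact Nat.cast_sub this
  rw [hcast]
  rw [show (s : ℝ) ^ r = ∏ _i ∈ Finset.range r, (s : ℝ) by simp]
  rw [← Finset.prod_div_distrib]
  refine Finset.prod_congr rfl fun i _ => ?_
  field_simp
open MeasureTheory ProbabilityTheory Real BigOperators Filter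

def kern {m s : ℕ} (f : Fin m → Fin s) : Finset (Finset (Fin m)) :=
  (Finset.univ.image f).image (fun j => Finset.univ.filter (fun i => f i = j))

lemma mem_kern_iff {m s : ℕ} {f : Fin m → Fin s} {b : Finset (Fin m)} :
    b ∈ kern f ↔ ∃ i : Fin m, b = Finset.univ.filter (fun i' => f i' = f i) := by
  simp only [kern, Finset.mem_image, Finset.mem_univ, true_and]
  constructor
  · rintro ⟨j, ⟨i, rfl⟩, rfl⟩; exact ⟨i, rfl⟩
  · rintro ⟨i, rfl⟩; exact ⟨f i, ⟨i, rfl⟩, rfl⟩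

lemma kern_block_eq {m s : ℕ} {f : Fin m → Fin s} {b : Finset (Fin m)}
    (hb : b ∈ kern f) {i : Fin m} (hi : i ∈ b) :
    b = Finset.univ.filter (fun i' => f i' = f i) := by
  obtain ⟨i₀, rfl⟩ := mem_kern_iff.mp hb
  have : f i = f i₀ := (Finset.mem_filter.mp hi).2
  simp [this]

lemma kern_isPartition {m s : ℕ} (f : Fin m → Fin s) : IsPartitionFinset m (kern f) := by
  refine ⟨?_, ?_, ?_⟩
  · intro b hb
    obtain ⟨i, rfl⟩ := mem_kern_iff.mp hb
    exact ⟨i, by simp⟩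
  · intro b hb b' hb' hne
    obtain ⟨i, rfl⟩ := mem_kern_iff.mp hb
    obtain ⟨i', rfl⟩ := mem_kern_iff.mp hb'
    refine Finset.disjoint_left.mpr fun x hx hx' => hne ?_
    have h1 : f x = f i := (Finset.mem_filter.mp hx).2
    have h2 : f x = f i' := (Finset.mem_filter.mp hx').2
    simp [← h1, ← h2]
  · intro i
    exact ⟨_, mem_kern_iff.mpr ⟨i, rfl⟩, by simp⟩

lemma kern_card {m s : ℕ} (f : Fin m → Fin s) :
    (kern f).card = (Finset.univ.image f).card :=
  Finset.card_image_of_injOn (fun j hj j' hj' h => by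
    obtain ⟨i, _, rfl⟩ := Finset.mem_image.mp hj
    have : i ∈ Finset.univ.filter (fun i' => f i' = f i) := by simp
    rw [h] at this
    exact ((Finset.mem_filter.mp this).2).symm ▸ rfl)

lemma kern_prod {m s : ℕ} (f : Fin m → Fin s) (g : Finset (Fin m) → ℝ) :
    ∏ b ∈ kern f, g b = ∏ j ∈ Finset.univ.image f,
      g (Finset.univ.filter (fun i => f i = j)) :=
  Finset.prod_image (fun j hj j' hj' h => by
    obtain ⟨i, _, rfl⟩ := Finset.mem_image.mp hj
    have : i ∈ Finset.univ.filter (fun i' => f i' = f i) := by simp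
    rw [h] at this
    exact ((Finset.mem_filter.mp this).2).symm ▸ rfl)

lemma card_kern_fiber (m s : ℕ) (P : Finset (Finset (Fin m))) (hP : IsPartitionFinset m P) :
    (Finset.univ.filter (fun f : Fin m → Fin s => kern f = P)).card
      = s.descFactorial P.card := by
  classical
  obtain ⟨hne, hdisj, hcov⟩ := hP
  have hbl : ∀ i : Fin m, ∃ b : {b // b ∈ P}, i ∈ b.1 := fun i => by
    obtain ⟨b, hb, hib⟩ := hcov i; exact ⟨⟨b, hb⟩, hib⟩
  choose blockOf hblockOf using hbl
  have huniq : ∀ (b : {b // b ∈ P}) (i : Fin m), i ∈ b.1 → blockOf i = b := by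
    intro b i hib
    by_contra hne'
    have hd : Disjoint (blockOf i).1 b.1 :=
      hdisj _ (blockOf i).2 _ b.2 (fun h => hne' (Subtype.ext h))
    exact Finset.disjoint_left.mp hd (hblockOf i) hib
  have hrep : ∀ b : {b // b ∈ P}, ∃ i, i ∈ b.1 := fun b => hne b.1 b.2
  choose rep hrepmem using hrep
  -- the map from embeddings to fiber
  have hkernΦ : ∀ e : {b // b ∈ P} ↪ Fin s, kern (fun i => (e (blockOf i) : Fin s)) = P := by
    intro e
    have hfib : ∀ i : Fin m,
        Finset.univ.filter (fun i' => (e (blockOf i') : Fin s) = e (blockOf i))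
          = (blockOf i).1 := by
      intro i
      ext i'
      simp only [Finset.mem_filter, Finset.mem_univ, true_and]
      constructor
      · intro h
        have : blockOf i' = blockOf i := e.injective h
        exact this ▸ hblockOf i'
      · intro h
        rw [huniq (blockOf i) i' h]
    apply Finset.Subset.antisymm
    · intro b hb
      obtain ⟨i, rfl⟩ := mem_kern_iff.mp hb
      rw [hfib i]
      exact (blockOf i).2
    · intro b hb
      have : blockOf (rep ⟨b, hb⟩) = ⟨b, hb⟩ := huniq ⟨b, hb⟩ _ (hrepmem ⟨b, hb⟩)
      refine mem_kern_iff.mpr ⟨rep ⟨b, hb⟩, ?_⟩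
      rw [hfib, this]
  let Φ : ({b // b ∈ P} ↪ Fin s) → {f : Fin m → Fin s // kern f = P} :=
    fun e => ⟨fun i => e (blockOf i), hkernΦ e⟩
  have hbij : Function.Bijective Φ := by
    constructor
    · intro e e' h
      refine Function.Embedding.ext fun b => ?_
      have h1 : (fun i => (e (blockOf i) : Fin s)) = fun i => e' (blockOf i) :=
        congrArg Subtype.val h
      have := congrFun h1 (rep b)
      rwa [huniq b _ (hrepmem b)] at this
    · rintro ⟨f, hf⟩
      have hblockf : ∀ i : Fin m,
          (blockOf i).1 = Finset.univ.filter (fun i' => f i' = f i) := by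
        intro i
        have : (blockOf i).1 ∈ kern f := hf ▸ (blockOf i).2
        exact kern_block_eq this (hblockOf i)
      have he0inj : Function.Injective (fun b : {b // b ∈ P} => f (rep b)) := by
        intro b b' h
        have h1 : rep b' ∈ (blockOf (rep b)).1 := by
          rw [hblockf (rep b)]
          simp only [Finset.mem_filter, Finset.mem_univ, true_and]
          exact h.symm
        have h2 := huniq (blockOf (rep b)) (rep b') h1
        have h3 := huniq b (rep b) (hrepmem b)
        have h4 := huniq b' (rep b') (hrepmem b')
        rw [h3] at h2
        rw [← h2, h4]
      refine ⟨⟨fun b => f (rep b), he0inj⟩, ?_⟩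
      apply Subtype.ext
      funext i
      show f (rep (blockOf i)) = f i
      have : rep (blockOf i) ∈ (blockOf i).1 := hrepmem (blockOf i)
      rw [hblockf i] at this
      exact (Finset.mem_filter.mp this).2
  have hcard := Fintype.card_of_bijective hbij
  rw [Fintype.card_embedding_eq, Fintype.card_fin, Fintype.card_coe] at hcard
  rw [Fintype.card_subtype] at hcard
  exact hcard.symm

lemma integrable_dirac_meas {α : Type*} [MeasurableSpace α] [MeasurableSingletonClass α]
    {f : α → ℝ} (hf : Measurable f) (a : α) : Integrable f (Measure.dirac a) := by
  refine ⟨hf.aestronglyMeasurable, ?_⟩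
  simp [HasFiniteIntegral, lintegral_dirac' _ hf.enorm]

lemma stepA {Ωs : Type} [MeasurableSpace Ωs] {μ : Measure Ωs}
    (lam : ℝ) (hlam : 0 < lam) (m s : ℕ) (hs : 0 < s) (hls : lam ≤ s)
    (ν : Measure ℝ) [IsProbabilityMeasure ν] (hmom : Integrable (fun x => |x| ^ m) ν)
    (B X : Fin s → Ωs → ℝ) (hBmeas : ∀ j, Measurable (B j)) (hXmeas : ∀ j, Measurable (X j))
    (hindep : iIndepFun (Sum.elim B X) μ)
    (hB : ∀ j, Measure.map (B j) μ = ENNReal.ofReal (1 - lam / s) • Measure.dirac (0 : ℝ)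
        + ENNReal.ofReal (lam / s) • Measure.dirac (1 : ℝ))
    (hX : ∀ j, Measure.map (X j) μ = ν)
    (f : Fin m → Fin s) :
    Integrable (fun ω => ∏ i, B (f i) ω * X (f i) ω) μ ∧
    ∫ ω, ∏ i, B (f i) ω * X (f i) ω ∂μ
      = (lam / s) ^ (kern f).card * ∏ b ∈ kern f, ∫ x, x ^ b.card ∂ν := by
  classical
  haveI : IsProbabilityMeasure μ := hindep.isProbabilityMeasure
  set t := Finset.univ.image f with ht
  set c : Fin s → ℕ := fun j => (Finset.univ.filter (fun i => f i = j)).card with hc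
  set n : Fin s ⊕ Fin s → ℕ := Sum.elim c c with hn
  set W : Fin s ⊕ Fin s → Ωs → ℝ := fun p => (fun x : ℝ => x ^ n p) ∘ Sum.elim B X p with hW
  have hcm : ∀ j, c j ≤ m := fun j => by
    simpa using (Finset.card_filter_le Finset.univ (fun i => f i = j))
  have hWmeas : ∀ p, Measurable (W p) := by
    rintro (j | j)
    · exact (hBmeas j).pow_const _
    · exact (hXmeas j).pow_const _
  have hWindep : iIndepFun W μ :=
    hindep.comp (fun p => fun x : ℝ => x ^ n p) (fun p => measurable_id.pow_const _)
  have hνint : ∀ k, k ≤ m → Integrable (fun x : ℝ => x ^ k) ν := by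
    intro k hk
    have h1 : Integrable (fun x : ℝ => 1 + |x| ^ m) ν := (integrable_const 1).add hmom
    refine h1.mono ((measurable_id.pow_const k).aestronglyMeasurable) (ae_of_all _ fun x => ?_)
    rw [Real.norm_eq_abs, abs_pow]
    have hb : |x| ^ k ≤ 1 + |x| ^ m := by
      rcases le_total (|x|) 1 with h | h
      · have := pow_le_one₀ (abs_nonneg x) h (n := k)
        nlinarith [pow_nonneg (abs_nonneg x) m]
      · have := pow_le_pow_right₀ h hk
        nlinarith
    calc |x| ^ k ≤ 1 + |x| ^ m := hb
      _ ≤ ‖1 + |x| ^ m‖ := le_abs_self _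
  have hXint : ∀ j (k : ℕ), k ≤ m → Integrable (fun ω => X j ω ^ k) μ := by
    intro j k hk
    have h := integrable_map_measure (μ := μ) (f := X j) (g := fun x : ℝ => x ^ k)
        ((measurable_id.pow_const k)).aestronglyMeasurable (hXmeas j).aemeasurable
    rw [hX j] at h
    exact h.mp (hνint k hk)
  have hdint : ∀ k : ℕ, Integrable (fun x : ℝ => x ^ k)
      (ENNReal.ofReal (1 - lam / s) • Measure.dirac (0 : ℝ)
        + ENNReal.ofReal (lam / s) • Measure.dirac (1 : ℝ)) := by
    intro k
    rw [integrable_add_measure]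
    exact ⟨(integrable_dirac_meas (measurable_id.pow_const k) 0).smul_measure ENNReal.ofReal_ne_top,
      (integrable_dirac_meas (measurable_id.pow_const k) 1).smul_measure ENNReal.ofReal_ne_top⟩
  have hBint : ∀ j (k : ℕ), Integrable (fun ω => B j ω ^ k) μ := by
    intro j k
    have h := integrable_map_measure (μ := μ) (f := B j) (g := fun x : ℝ => x ^ k)
        ((measurable_id.pow_const k)).aestronglyMeasurable (hBmeas j).aemeasurable
    rw [hB j] at h
    exact h.mp (hdint k)
  have hBval : ∀ j (k : ℕ), k ≠ 0 → ∫ ω, B j ω ^ k ∂μ = lam / s := by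
    intro j k hk
    have hmap : ∫ ω, B j ω ^ k ∂μ = ∫ x, x ^ k ∂(Measure.map (B j) μ) :=
      (integral_map (hBmeas j).aemeasurable
        ((measurable_id.pow_const k)).aestronglyMeasurable).symm
    have h2 := hdint k
    rw [integrable_add_measure] at h2
    rw [hmap, hB j, integral_add_measure h2.1 h2.2, integral_smul_measure,
      integral_smul_measure, integral_dirac, integral_dirac]
    simp [zero_pow hk, ENNReal.toReal_ofReal (div_nonneg hlam.le (Nat.cast_nonneg s))]
  have hXval : ∀ j (k : ℕ), ∫ ω, X j ω ^ k ∂μ = ∫ x, x ^ k ∂ν := by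
    intro j k
    have hmap : ∫ ω, X j ω ^ k ∂μ = ∫ x, x ^ k ∂(Measure.map (X j) μ) :=
      (integral_map (hXmeas j).aemeasurable
        ((measurable_id.pow_const k)).aestronglyMeasurable).symm
    rw [hmap, hX j]
  have hWint : ∀ p, Integrable (W p) μ := by
    rintro (j | j)
    · exact hBint j _
    · exact hXint j _ (hcm j)
  -- pointwise splitting
  have hsplit : ∀ ω, ∏ i, B (f i) ω * X (f i) ω = ∏ p ∈ t.disjSum t, W p ω := by
    intro ω
    rw [Finset.prod_disjSum]
    have hl : ∀ j, W (Sum.inl j) ω = B j ω ^ c j := fun j => rfl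
    have hr : ∀ j, W (Sum.inr j) ω = X j ω ^ c j := fun j => rfl
    simp only [hl, hr]
    rw [← Finset.prod_mul_distrib]
    rw [← Finset.prod_fiberwise_of_maps_to
      (fun i _ => Finset.mem_image_of_mem f (Finset.mem_univ i))
      (fun i => B (f i) ω * X (f i) ω)]
    refine Finset.prod_congr rfl fun j hj => ?_
    have hcongr : ∏ i ∈ Finset.univ.filter (fun i => f i = j), (B (f i) ω * X (f i) ω)
        = ∏ i ∈ Finset.univ.filter (fun i => f i = j), (B j ω * X j ω) :=
      Finset.prod_congr rfl (fun i hi => by rw [(Finset.mem_filter.mp hi).2])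
    rw [hcongr, Finset.prod_const, mul_pow]
  obtain ⟨hint, heq⟩ := indep_integral_prod hWindep hWmeas (t.disjSum t) (fun p _ => hWint p)
  have hfun : (fun ω => ∏ i, B (f i) ω * X (f i) ω) = fun ω => ∏ p ∈ t.disjSum t, W p ω :=
    funext hsplit
  constructor
  · rw [hfun]; exact hint
  · rw [hfun, heq, Finset.prod_disjSum]
    have h1 : ∀ j ∈ t, ∫ ω, W (Sum.inl j) ω ∂μ = lam / s := by
      intro j hj
      have hc0 : c j ≠ 0 := by
        obtain ⟨i, _, rfl⟩ := Finset.mem_image.mp hj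
        exact Finset.card_ne_zero_of_mem (by simp : i ∈ Finset.univ.filter (fun i' => f i' = f i))
      exact hBval j (c j) hc0
    have h2 : ∀ j, ∫ ω, W (Sum.inr j) ω ∂μ = ∫ x, x ^ c j ∂ν := fun j => hXval j (c j)
    rw [Finset.prod_congr rfl h1, Finset.prod_const, Finset.prod_congr rfl (fun j _ => h2 j)]
    rw [kern_card, kern_prod]

/-- **Moment formula characterizing the Poisson random measure** (scalar, commutative instance
of property (iv) in Section 4 of the paper): if for each `s ≥ λ` the random variables
`B₁, …, B_s, X₁, …, X_s` are mutually independent, `B_j` Bernoulli of parameter `λ/s` and `X_j`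
distributed as `ν`, then
`E[(Σ_j B_j X_j)^m] = Σ_{σ partition of {1,…,m}} s!/(s^{|σ|}(s-|σ|)!) · λ^{|σ|} · Π_k m_{|σ_k|}`
(with `s!/(s-r)!` the falling factorial `s(s-1)⋯(s-r+1)`), and consequently as `s → ∞` these
moments converge to `Σ_{σ partition} λ^{|σ|} Π_k m_{|σ_k|}`, where `m_ℓ = ∫ x^ℓ dν`. -/
theorem stmt_6 (lam : ℝ) (hlam : 0 < lam) (m : ℕ) (hm : 0 < m)
    (ν : Measure ℝ) [IsProbabilityMeasure ν]
    (hmom : Integrable (fun x => |x| ^ m) ν)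
    (Ω : ℕ → Type) (mΩ : ∀ s, MeasurableSpace (Ω s)) (μ : ∀ s, Measure (Ω s))
    (hprob : ∀ s, IsProbabilityMeasure (μ s))
    (B X : ∀ s : ℕ, Fin s → Ω s → ℝ)
    (hBmeas : ∀ s j, Measurable (B s j)) (hXmeas : ∀ s j, Measurable (X s j))
    (hindep : ∀ s : ℕ, lam ≤ (s : ℝ) →
      iIndepFun (Sum.elim (B s) (X s)) (μ s))
    (hB : ∀ s : ℕ, lam ≤ (s : ℝ) → ∀ j, Measure.map (B s j) (μ s)
      = ENNReal.ofReal (1 - lam / s) • Measure.dirac (0 : ℝ)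
        + ENNReal.ofReal (lam / s) • Measure.dirac (1 : ℝ))
    (hX : ∀ s : ℕ, lam ≤ (s : ℝ) → ∀ j, Measure.map (X s j) (μ s) = ν) :
    (∀ s : ℕ, 0 < s → lam ≤ (s : ℝ) →
      ∫ ω, (∑ j, B s j ω * X s j ω) ^ m ∂(μ s)
        = ∑ P ∈ Finset.univ.filter (fun P : Finset (Finset (Fin m)) => IsPartitionFinset m P),
            ((s.descFactorial P.card : ℝ) / (s : ℝ) ^ P.card) * lam ^ P.card
              * ∏ b ∈ P, ∫ x, x ^ b.card ∂ν) ∧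
    Tendsto (fun s : ℕ => ∫ ω, (∑ j, B s j ω * X s j ω) ^ m ∂(μ s)) atTop
      (nhds (∑ P ∈ Finset.univ.filter
          (fun P : Finset (Finset (Fin m)) => IsPartitionFinset m P),
          lam ^ P.card * ∏ b ∈ P, ∫ x, x ^ b.card ∂ν)) := by
  classical
  have part1 : ∀ s : ℕ, 0 < s → lam ≤ (s : ℝ) →
      ∫ ω, (∑ j, B s j ω * X s j ω) ^ m ∂(μ s)
        = ∑ P ∈ Finset.univ.filter (fun P : Finset (Finset (Fin m)) => IsPartitionFinset m P),
            ((s.descFactorial P.card : ℝ) / (s : ℝ) ^ P.card) * lam ^ P.card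
              * ∏ b ∈ P, ∫ x, x ^ b.card ∂ν := by
    intro s hs hls
    have key := fun f : Fin m → Fin s => stepA lam hlam m s hs hls ν hmom (B s) (X s)
      (hBmeas s) (hXmeas s) (hindep s hls) (hB s hls) (hX s hls) f
    have hexp : ∀ ω : Ω s, (∑ j, B s j ω * X s j ω) ^ m
        = ∑ f : Fin m → Fin s, ∏ i, B s (f i) ω * X s (f i) ω := by
      intro ω; rw [Fintype.sum_pow]
    calc ∫ ω, (∑ j, B s j ω * X s j ω) ^ m ∂(μ s)
        = ∫ ω, ∑ f : Fin m → Fin s, ∏ i, B s (f i) ω * X s (f i) ω ∂(μ s) := by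
          simp_rw [hexp]
      _ = ∑ f : Fin m → Fin s, ∫ ω, ∏ i, B s (f i) ω * X s (f i) ω ∂(μ s) :=
          integral_finset_sum _ (fun f _ => (key f).1)
      _ = ∑ f : Fin m → Fin s, (lam / s) ^ (kern f).card * ∏ b ∈ kern f, ∫ x, x ^ b.card ∂ν :=
          Finset.sum_congr rfl (fun f _ => (key f).2)
      _ = ∑ P ∈ Finset.univ.filter (fun P : Finset (Finset (Fin m)) => IsPartitionFinset m P),
            ∑ f ∈ Finset.univ.filter (fun f : Fin m → Fin s => kern f = P),
              ((lam / s) ^ (kern f).card * ∏ b ∈ kern f, ∫ x, x ^ b.card ∂ν) :=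
          (Finset.sum_fiberwise_of_maps_to (fun f _ =>
            Finset.mem_filter.mpr ⟨Finset.mem_univ _, kern_isPartition f⟩) _).symm
      _ = ∑ P ∈ Finset.univ.filter (fun P : Finset (Finset (Fin m)) => IsPartitionFinset m P),
            ((s.descFactorial P.card : ℝ))
              * ((lam / s) ^ P.card * ∏ b ∈ P, ∫ x, x ^ b.card ∂ν) := by
          refine Finset.sum_congr rfl fun P hP => ?_
          have hPpart : IsPartitionFinset m P := (Finset.mem_filter.mp hP).2
          have h1 : ∀ f ∈ Finset.univ.filter (fun f : Fin m → Fin s => kern f = P),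
              (lam / s) ^ (kern f).card * ∏ b ∈ kern f, ∫ x, x ^ b.card ∂ν
                = (lam / s) ^ P.card * ∏ b ∈ P, ∫ x, x ^ b.card ∂ν := by
            intro f hf; rw [(Finset.mem_filter.mp hf).2]
          rw [Finset.sum_congr rfl h1, Finset.sum_const,
            card_kern_fiber m s P hPpart, nsmul_eq_mul]
      _ = ∑ P ∈ Finset.univ.filter (fun P : Finset (Finset (Fin m)) => IsPartitionFinset m P),
            ((s.descFactorial P.card : ℝ) / (s : ℝ) ^ P.card) * lam ^ P.card
              * ∏ b ∈ P, ∫ x, x ^ b.card ∂ν := by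
          refine Finset.sum_congr rfl fun P hP => ?_
          rw [div_pow]
          ring
  refine ⟨part1, ?_⟩
  have hev : (fun s : ℕ => ∑ P ∈ Finset.univ.filter
        (fun P : Finset (Finset (Fin m)) => IsPartitionFinset m P),
        ((s.descFactorial P.card : ℝ) / (s : ℝ) ^ P.card) * lam ^ P.card
          * ∏ b ∈ P, ∫ x, x ^ b.card ∂ν)
      =ᶠ[atTop] (fun s : ℕ => ∫ ω, (∑ j, B s j ω * X s j ω) ^ m ∂(μ s)) := by
    have h1 : ∀ᶠ s : ℕ in atTop, lam ≤ (s : ℝ) :=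
      (tendsto_natCast_atTop_atTop (R := ℝ)).eventually_ge_atTop lam
    filter_upwards [h1, eventually_gt_atTop 0] with s hls hs
    exact (part1 s hs hls).symm
  refine Tendsto.congr' hev ?_
  refine tendsto_finset_sum _ fun P hP => ?_
  have h1 := descFactorial_div_pow_tendsto P.card
  have h2 := (h1.mul_const (lam ^ P.card)).mul_const (∏ b ∈ P, ∫ x, x ^ b.card ∂ν)
  simpa using h2
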